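/- The anonymity atom is definable in inclusion logic: for any team X, M ⊨_X 𝗑Υ𝗒 (for every s ∈ X there is s' ∈ X with s(𝗑) = s'(𝗑) and s(𝗒) ≠ s'(𝗒)) if and only if M ⊨_X ∃𝗏(𝗑𝗏 ⊆ 𝗑𝗒 ∧ 𝗏 ≠ 𝗒), where 𝗏 is a sequence of fresh variables and 𝗏 ≠ 𝗒 abbreviates the disjunction ⋁ᵢ vᵢ ≠ yᵢ with disjunction interpreted by team splitting. -/

import Mathlib

namespace TeamSem

variable {M : Type}

/-- A team is a set of assignments (variables are natural numbers). -/
abbrev Team (M : Type) := Set (ℕ → M)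

/-- Lax existential extension of a team `X` along variable `x` by a choice function `F`. -/
def extT (X : Team M) (x : ℕ) (F : (ℕ → M) → Set M) : Team M :=
  {t | ∃ s ∈ X, ∃ a ∈ F s, t = Function.update s x a}

/-- Universal extension of a team `X` along variable `x`. -/
def extAll (X : Team M) (x : ℕ) : Team M :=
  {t | ∃ s ∈ X, ∃ a : M, t = Function.update s x a}

/-- First-order formulas with semantic atoms depending on a finite list of variables. -/
inductive FOForm (M : Type) where
  | atom : List ℕ → (List M → Prop) → FOForm M
  | neg  : FOForm M → FOForm M
  | and  : FOForm M → FOForm M → FOForm M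
  | or   : FOForm M → FOForm M → FOForm M
  | ex   : ℕ → FOForm M → FOForm M
  | all  : ℕ → FOForm M → FOForm M

/-- Tarskian (single-assignment) satisfaction for first-order formulas. -/
def FOForm.sat : FOForm M → (ℕ → M) → Prop
  | .atom l p, s => p (l.map s)
  | .neg φ, s => ¬ FOForm.sat φ s
  | .and φ ψ, s => FOForm.sat φ s ∧ FOForm.sat ψ s
  | .or φ ψ, s => FOForm.sat φ s ∨ FOForm.sat ψ s
  | .ex x φ, s => ∃ a : M, FOForm.sat φ (Function.update s x a)
  | .all x φ, s => ∀ a : M, FOForm.sat φ (Function.update s x a)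

/-- Free variables of a first-order formula. -/
def FOForm.fv : FOForm M → Set ℕ
  | .atom l _ => {v | v ∈ l}
  | .neg φ => FOForm.fv φ
  | .and φ ψ => FOForm.fv φ ∪ FOForm.fv ψ
  | .or φ ψ => FOForm.fv φ ∪ FOForm.fv ψ
  | .ex x φ => FOForm.fv φ \ {x}
  | .all x φ => FOForm.fv φ \ {x}

/-- Formulas of inclusion logic: first-order formulas (with negation applied
only to first-order formulas), inclusion atoms, ∧, ∨, ∃, ∀. -/
inductive IncForm (M : Type) where
  | fo   : FOForm M → IncForm M
  | incl : List ℕ → List ℕ → IncForm M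
  | and  : IncForm M → IncForm M → IncForm M
  | or   : IncForm M → IncForm M → IncForm M
  | ex   : ℕ → IncForm M → IncForm M
  | all  : ℕ → IncForm M → IncForm M

/-- Lax team semantics for inclusion logic. -/
def IncForm.tsat : IncForm M → Team M → Prop
  | .fo α, X => ∀ s ∈ X, FOForm.sat α s
  | .incl xs ys, X => ∀ s ∈ X, ∃ s' ∈ X, xs.map s = ys.map s'
  | .and φ ψ, X => IncForm.tsat φ X ∧ IncForm.tsat ψ X
  | .or φ ψ, X => ∃ Y Z : Team M, X = Y ∪ Z ∧ IncForm.tsat φ Y ∧ IncForm.tsat ψ Z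
  | .ex x φ, X => ∃ F : (ℕ → M) → Set M, (∀ s ∈ X, (F s).Nonempty) ∧
      IncForm.tsat φ (extT X x F)
  | .all x φ, X => IncForm.tsat φ (extAll X x)

/-- Free variables of an inclusion logic formula. -/
def IncForm.fv : IncForm M → Set ℕ
  | .fo α => FOForm.fv α
  | .incl xs ys => {v | v ∈ xs ∨ v ∈ ys}
  | .and φ ψ => IncForm.fv φ ∪ IncForm.fv ψ
  | .or φ ψ => IncForm.fv φ ∪ IncForm.fv ψ
  | .ex x φ => IncForm.fv φ \ {x}
  | .all x φ => IncForm.fv φ \ {x}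

/-- A block of existential quantifiers. -/
def IncForm.exs (l : List ℕ) (φ : IncForm M) : IncForm M := l.foldr IncForm.ex φ

/-- A block of universal quantifiers. -/
def IncForm.alls (l : List ℕ) (φ : IncForm M) : IncForm M := l.foldr IncForm.all φ

/-- The first-order equality atom `x = y`. -/
def eqAtom (x y : ℕ) : FOForm M :=
  .atom [x, y] (fun l => match l with | [a, b] => a = b | _ => False)

/-- The first-order inequality atom `x ≠ y`. -/
def neqAtom (x y : ℕ) : FOForm M :=
  .atom [x, y] (fun l => match l with | [a, b] => a ≠ b | _ => False)

/-- First-order biconditional `α ↔ β`, i.e. `(¬α ∨ β) ∧ (¬β ∨ α)`. -/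
def iffF (a b : FOForm M) : FOForm M := .and (.or (.neg a) b) (.or (.neg b) a)

/-- Conjunction of a list of inclusion logic formulas. -/
def bigAndI (l : List (IncForm M)) : IncForm M :=
  l.foldr IncForm.and (.fo (.atom [] (fun _ => True)))

/-- Disjunction of a list of inclusion logic formulas (empty disjunction is `⊥`). -/
def bigOrI (l : List (IncForm M)) : IncForm M :=
  l.foldr IncForm.or (.fo (.atom [] (fun _ => False)))


/-- Characterization of a block of lax existential quantifiers. -/
lemma exs_iff (φ : IncForm M) : ∀ (v : List ℕ) (X : Team M),
    (IncForm.exs v φ).tsat X ↔ ∃ X' : Team M,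
      (∀ t ∈ X', ∃ s ∈ X, ∀ u, u ∉ v → t u = s u) ∧
      (∀ s ∈ X, ∃ t ∈ X', ∀ u, u ∉ v → t u = s u) ∧ φ.tsat X'
  | [], X => by
    simp only [IncForm.exs, List.foldr]
    constructor
    · intro h
      exact ⟨X, fun t ht => ⟨t, ht, fun _ _ => rfl⟩,
        fun s hs => ⟨s, hs, fun _ _ => rfl⟩, h⟩
    · rintro ⟨X', h1, h2, hφ⟩
      have hXX : X' = X := by
        ext t
        constructor
        · intro ht
          obtain ⟨s, hs, hts⟩ := h1 t ht
          have : t = s := funext fun u => hts u List.not_mem_nil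
          rw [this]; exact hs
        · intro ht
          obtain ⟨t', ht', hts⟩ := h2 t ht
          have : t' = t := funext fun u => hts u List.not_mem_nil
          rw [← this]; exact ht'
      rw [← hXX]; exact hφ
  | v0 :: vt, X => by
    have IH := exs_iff φ vt
    constructor
    · rintro ⟨F, hF, hin⟩
      obtain ⟨X', h1, h2, hφ⟩ := (IH _).mp hin
      refine ⟨X', ?_, ?_, hφ⟩
      · intro t ht
        obtain ⟨w, hw, htw⟩ := h1 t ht
        obtain ⟨s, hs, a, _, rfl⟩ := hw
        refine ⟨s, hs, fun u hu => ?_⟩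
        have hu0 : u ≠ v0 := fun h => hu (by simp [h])
        have hut : u ∉ vt := fun h => hu (by simp [h])
        rw [htw u hut, Function.update_of_ne hu0]
      · intro s hs
        obtain ⟨a, ha⟩ := hF s hs
        have hw : Function.update s v0 a ∈ extT X v0 F := ⟨s, hs, a, ha, rfl⟩
        obtain ⟨t, ht, htw⟩ := h2 _ hw
        refine ⟨t, ht, fun u hu => ?_⟩
        have hu0 : u ≠ v0 := fun h => hu (by simp [h])
        have hut : u ∉ vt := fun h => hu (by simp [h])
        rw [htw u hut, Function.update_of_ne hu0]
    · rintro ⟨X', h1, h2, hφ⟩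
      refine ⟨fun s => {a | ∃ t ∈ X', (∀ u, u ∉ v0 :: vt → t u = s u) ∧ a = t v0}, ?_, ?_⟩
      · intro s hs
        obtain ⟨t, ht, hts⟩ := h2 s hs
        exact ⟨t v0, t, ht, hts, rfl⟩
      · apply (IH _).mpr
        refine ⟨X', ?_, ?_, hφ⟩
        · intro t ht
          obtain ⟨s, hs, hts⟩ := h1 t ht
          refine ⟨Function.update s v0 (t v0), ⟨s, hs, t v0, ⟨t, ht, hts, rfl⟩, rfl⟩,
            fun u hu => ?_⟩
          by_cases h : u = v0
          · subst h; rw [Function.update_self]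
          · rw [Function.update_of_ne h]
            exact hts u (by simp [h, hu])
        · rintro w ⟨s, hs, a, ⟨t, ht, hts, rfl⟩, rfl⟩
          refine ⟨t, ht, fun u hu => ?_⟩
          by_cases h : u = v0
          · subst h; rw [Function.update_self]
          · rw [Function.update_of_ne h]
            exact hts u (by simp [h, hu])

/-- Team semantics of a disjunction of first-order formulas is pointwise. -/
lemma bigOr_fo_iff : ∀ (l : List (FOForm M)) (X : Team M),
    (bigOrI (l.map IncForm.fo)).tsat X ↔ ∀ t ∈ X, ∃ α ∈ l, α.sat t
  | [], X => by
    simp only [List.map_nil, bigOrI, List.foldr, IncForm.tsat]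
    constructor
    · intro h t ht
      exact absurd (h t ht) (by simp [FOForm.sat])
    · intro h t ht
      exact absurd (h t ht) (by simp)
  | α :: l, X => by
    constructor
    · rintro ⟨Y, Z, rfl, hY, hZ⟩
      intro t ht
      rcases ht with ht | ht
      · exact ⟨α, by simp, hY t ht⟩
      · obtain ⟨β, hβ, hβt⟩ := (bigOr_fo_iff l Z).mp hZ t ht
        exact ⟨β, by simp [hβ], hβt⟩
    · intro h
      refine ⟨{t ∈ X | α.sat t}, {t ∈ X | ∃ β ∈ l, β.sat t}, ?_, ?_, ?_⟩
      · ext t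
        constructor
        · intro ht
          obtain ⟨β, hβ, hβt⟩ := h t ht
          rcases List.mem_cons.mp hβ with rfl | hβ
          · exact Or.inl ⟨ht, hβt⟩
          · exact Or.inr ⟨ht, β, hβ, hβt⟩
        · rintro (⟨ht, _⟩ | ⟨ht, _⟩) <;> exact ht
      · exact fun t ht => ht.2
      · exact (bigOr_fo_iff l _).mpr fun t ht => ht.2

/-- Simultaneous update of an assignment along a list of variables. -/
def updL (s : ℕ → M) : List ℕ → List M → ℕ → M
  | [], _ => s
  | _ :: _, [] => s
  | w :: ws, a :: as => Function.update (updL s ws as) w a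

lemma updL_not_mem (s : ℕ → M) : ∀ (vs : List ℕ) (as : List M) (u : ℕ),
    u ∉ vs → updL s vs as u = s u
  | [], _, u, _ => rfl
  | _ :: _, [], u, _ => rfl
  | w :: ws, a :: as, u, hu => by
    have h1 : u ≠ w := fun h => hu (by simp [h])
    rw [updL, Function.update_of_ne h1]
    exact updL_not_mem s ws as u (fun h => hu (by simp [h]))

lemma map_updL (s : ℕ → M) : ∀ (vs : List ℕ) (as : List M), vs.Nodup →
    as.length = vs.length → vs.map (updL s vs as) = as
  | [], [], _, _ => rfl
  | [], _ :: _, _, h => by simp at h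
  | _ :: _, [], _, h => by simp at h
  | w :: ws, a :: as, hnd, hlen => by
    simp only [List.map_cons, updL, Function.update_self, List.cons.injEq, true_and]
    have hw : w ∉ ws := (List.nodup_cons.mp hnd).1
    have : ws.map (Function.update (updL s ws as) w a) = ws.map (updL s ws as) :=
      List.map_congr_left fun u hu =>
        Function.update_of_ne (fun h => hw (by rwa [← h])) _ _
    rw [this, map_updL s ws as (List.nodup_cons.mp hnd).2 (by simpa using hlen)]

lemma map_eq_of_zip (t : ℕ → M) : ∀ (v y : List ℕ), v.length = y.length →
    (∀ pr ∈ v.zip y, t pr.1 = t pr.2) → v.map t = y.map t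
  | [], [], _, _ => rfl
  | [], _ :: _, h, _ => by simp at h
  | _ :: _, [], h, _ => by simp at h
  | a :: v, b :: y, hlen, h => by
    simp only [List.map_cons]
    rw [h (a, b) (by simp [List.zip_cons_cons]),
      map_eq_of_zip t v y (by simpa using hlen)
        (fun pr hpr => h pr (by simp [List.zip_cons_cons, hpr]))]

lemma zip_of_map_eq (t : ℕ → M) : ∀ (v y : List ℕ), v.map t = y.map t →
    ∀ pr ∈ v.zip y, t pr.1 = t pr.2
  | [], _, _, pr, hpr => by simp at hpr
  | _ :: _, [], _, pr, hpr => by simp at hpr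
  | a :: v, b :: y, h, pr, hpr => by
    simp only [List.map_cons, List.cons.injEq] at h
    rcases List.mem_cons.mp (by simpa [List.zip_cons_cons] using hpr) with rfl | hpr'
    · exact h.1
    · exact zip_of_map_eq t v y h.2 pr hpr'

lemma bigOr_neq_iff (v y : List ℕ) (X : Team M) :
    (bigOrI ((v.zip y).map fun pr => IncForm.fo (neqAtom pr.1 pr.2))).tsat X ↔
      ∀ t ∈ X, ∃ pr ∈ v.zip y, t pr.1 ≠ t pr.2 := by
  have hmap : ((v.zip y).map fun pr => IncForm.fo (neqAtom pr.1 pr.2)) =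
      ((v.zip y).map fun pr => (neqAtom pr.1 pr.2 : FOForm M)).map IncForm.fo := by
    rw [List.map_map]; rfl
  rw [hmap, bigOr_fo_iff]
  constructor
  · intro h t ht
    obtain ⟨α, hα, hαt⟩ := h t ht
    obtain ⟨pr, hpr, rfl⟩ := List.mem_map.mp hα
    exact ⟨pr, hpr, hαt⟩
  · intro h t ht
    obtain ⟨pr, hpr, hne⟩ := h t ht
    exact ⟨neqAtom pr.1 pr.2, List.mem_map.mpr ⟨pr, hpr, rfl⟩, hne⟩

/-- the anonymity atom `𝗑Υ𝗒` is definable in inclusion logic: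
`𝗑Υ𝗒 ≡ ∃𝗏(𝗑𝗏 ⊆ 𝗑𝗒 ∧ 𝗏 ≠ 𝗒)` where `𝗏` is fresh and `𝗏 ≠ 𝗒` is the
(team-splitting) disjunction `⋁ᵢ vᵢ ≠ yᵢ`. -/
theorem anonymity_definable (x y v : List ℕ) (X : Team M)
    (hlen : v.length = y.length) (hvnd : v.Nodup)
    (hvx : ∀ u ∈ v, u ∉ x) (hvy : ∀ u ∈ v, u ∉ y) :
    (∀ s ∈ X, ∃ s' ∈ X, x.map s = x.map s' ∧ y.map s ≠ y.map s') ↔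
      IncForm.tsat (IncForm.exs v (.and (.incl (x ++ v) (x ++ y))
        (bigOrI ((v.zip y).map fun pr => .fo (neqAtom pr.1 pr.2))))) X := by
  rw [exs_iff]
  have hvy' : ∀ u ∈ y, u ∉ v := fun u hu hv => hvy u hv hu
  have hvx' : ∀ u ∈ x, u ∉ v := fun u hu hv => hvx u hv hu
  constructor
  · intro hA
    refine ⟨{t | ∃ s ∈ X, ∃ s' ∈ X, x.map s = x.map s' ∧ y.map s ≠ y.map s' ∧
        t = updL s v (y.map s')}, ?_, ?_, ?_, ?_⟩
    · rintro t ⟨s, hs, s', hs', hx, hy, rfl⟩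
      exact ⟨s, hs, fun u hu => updL_not_mem s v _ u hu⟩
    · intro s hs
      obtain ⟨s', hs', hx, hy⟩ := hA s hs
      exact ⟨_, ⟨s, hs, s', hs', hx, hy, rfl⟩, fun u hu => updL_not_mem s v _ u hu⟩
    · rintro t ⟨s, hs, s', hs', hx, hy, rfl⟩
      obtain ⟨s'', hs'', hx', hy'⟩ := hA s' hs'
      refine ⟨updL s' v (y.map s''), ⟨s', hs', s'', hs'', hx', hy', rfl⟩, ?_⟩
      rw [List.map_append, List.map_append]
      have e1 : x.map (updL s v (y.map s')) = x.map s :=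
        List.map_congr_left fun u hu => updL_not_mem s v _ u (hvx' u hu)
      have e2 : x.map (updL s' v (y.map s'')) = x.map s' :=
        List.map_congr_left fun u hu => updL_not_mem s' v _ u (hvx' u hu)
      have e3 : y.map (updL s' v (y.map s'')) = y.map s' :=
        List.map_congr_left fun u hu => updL_not_mem s' v _ u (hvy' u hu)
      rw [e1, e2, e3, hx, map_updL s v (y.map s') hvnd (by simp [hlen])]
    · rw [bigOr_neq_iff]
      rintro t ⟨s, hs, s', hs', hx, hy, rfl⟩
      by_contra h
      push_neg at h
      apply hy
      have hmv : v.map (updL s v (y.map s')) = y.map s' :=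
        map_updL s v (y.map s') hvnd (by simp [hlen])
      have hmy : y.map (updL s v (y.map s')) = y.map s :=
        List.map_congr_left fun u hu => updL_not_mem s v _ u (hvy' u hu)
      have := map_eq_of_zip (updL s v (y.map s')) v y hlen h
      rw [hmv, hmy] at this
      exact this.symm
  · rintro ⟨X', h1, h2, hinc, hbig⟩
    intro s hs
    obtain ⟨t, ht, hts⟩ := h2 s hs
    obtain ⟨t', ht', heq⟩ := hinc t ht
    obtain ⟨s'', hs'', ht's⟩ := h1 t' ht'
    rw [List.map_append, List.map_append] at heq
    obtain ⟨hx1, hv1⟩ := List.append_inj heq (by simp)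
    have ex1 : x.map t = x.map s :=
      List.map_congr_left fun u hu => hts u (hvx' u hu)
    have ex2 : x.map t' = x.map s'' :=
      List.map_congr_left fun u hu => ht's u (hvx' u hu)
    have ey1 : y.map t = y.map s :=
      List.map_congr_left fun u hu => hts u (hvy' u hu)
    have ey2 : y.map t' = y.map s'' :=
      List.map_congr_left fun u hu => ht's u (hvy' u hu)
    refine ⟨s'', hs'', by rw [← ex1, hx1, ex2], ?_⟩
    obtain ⟨pr, hpr, hne⟩ := (bigOr_neq_iff v y X').mp hbig t ht
    intro hcon
    apply hne
    apply zip_of_map_eq t v y ?_ pr hpr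
    rw [hv1, ey2, ← hcon, ← ey1]


end TeamSem
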